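/- Let n ≥ 1 and r ≥ 1 be integers. Let C_1, …, C_{2r+1} be invertible n×n complex matrices, m a diagonal n×n complex matrix, and M an invertible n×n complex matrix with C_{2r+1} = exp(−2πi·m)·C_1·M. Let γ_1, …, γ_{2r+1} and γ′_1, …, γ′_{2r+1} be n×n complex matrices and μ, μ′ diagonal n×n complex matrices satisfying the linearized relations γ_{2r+1} = exp(−2πi·m)·(γ_1 − 2πi·μ·C_1)·M and γ′_{2r+1} = exp(−2πi·m)·(γ′_1 − 2πi·μ′·C_1)·M. For each 1 ≤ i ≤ 2r set σ_i = C_i·(C_i^{−1}γ_i − C_{i+1}^{−1}γ_{i+1})·C_i^{−1} and σ′_i = C_i·(C_i^{−1}γ′_i − C_{i+1}^{−1}γ′_{i+1})·C_i^{−1}, and assume tr(σ_i·σ′_i) = 0 for every i. Define ω(γ,μ; γ′,μ′) = (1/(2πi))·Σ_{i=1}^{2r} tr( γ_i·C_i^{−1}·σ′_i ) + πi·tr(μ·μ′) − tr( γ_1·C_1^{−1}·μ′ ). Then ω(γ,μ; γ′,μ′) = −ω(γ′,μ′; γ,μ). -/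
import Mathlib

private lemma tele9 (f : ℕ → ℂ) (N : ℕ) :
    ∑ i ∈ Finset.Icc 1 N, (f i - f (i + 1)) = f 1 - f (N + 1) := by
  induction N with
  | zero => simp
  | succ k ih => rw [Finset.sum_Icc_succ_top (Nat.le_add_left 1 k), ih]; ring

private lemma trconv9 {n : ℕ} (Ci P g X : Matrix (Fin n) (Fin n) ℂ) (hP : P * Ci = 1) :
    (g * P * (Ci * X * P)).trace = ((P * g) * X).trace := by
  have h1 : g * P * (Ci * X * P) = g * X * P := by
    rw [show g * P * (Ci * X * P) = g * ((P * Ci) * (X * P)) by noncomm_ring, hP, one_mul,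
      Matrix.mul_assoc]
  rw [h1, Matrix.trace_mul_comm, ← Matrix.mul_assoc]

private lemma trconv9' {n : ℕ} (Ci P X Y : Matrix (Fin n) (Fin n) ℂ) (hP : P * Ci = 1) :
    ((Ci * X * P) * (Ci * Y * P)).trace = (X * Y).trace := by
  have h1 : (Ci * X * P) * (Ci * Y * P) = Ci * (X * Y) * P := by
    rw [show (Ci * X * P) * (Ci * Y * P) = Ci * (X * ((P * Ci) * Y)) * P by noncomm_ring, hP,
      one_mul, Matrix.mul_assoc]
  rw [h1, Matrix.trace_mul_comm, show P * (Ci * (X * Y)) = (P * Ci) * (X * Y) by noncomm_ring,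
    hP, one_mul]

private lemma trG9 {n : ℕ} (C1 P U V : Matrix (Fin n) (Fin n) ℂ) (hP : C1 * P = 1) :
    ((P * U) * (P * (V * C1))).trace = ((U * P) * V).trace := by
  have h1 : (P * U) * (P * (V * C1)) = P * (U * P * V) * C1 := by noncomm_ring
  rw [h1, Matrix.trace_mul_comm,
    show C1 * (P * (U * P * V)) = (C1 * P) * (U * P * V) by noncomm_ring, hP, one_mul]

private lemma traux9 {n : ℕ} (a b a' b' : Matrix (Fin n) (Fin n) ℂ)
    (h : ((a - b) * (a' - b')).trace = 0) :
    (a * (a' - b')).trace + (a' * (a - b)).trace = (a * a').trace - (b * b').trace := by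
  simp only [Matrix.mul_sub, Matrix.sub_mul, Matrix.trace_sub] at *
  linear_combination h + Matrix.trace_mul_comm a' a - Matrix.trace_mul_comm a' b

/-- Skew-symmetry of the 2-form `ω` on the space `C_r` of Stokes data (appendix
of the paper): with connection matrices `C i` (`1 ≤ i ≤ 2r+1`), exponent of
formal monodromy `m = diagonal md`, monodromy `M`, `C (2r+1) = e^{-2πim} C 1 M`,
tangent vectors `(γ, μ)`, `(γ', μ')` satisfying the linearized relation, induced
variations `σf g i = C i (C i⁻¹ g i - C (i+1)⁻¹ g (i+1)) C i⁻¹` of the Stokes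
matrices with `tr (σᵢ σ'ᵢ) = 0`, one has `ω(γ,μ;γ',μ') = -ω(γ',μ';γ,μ)`. -/
theorem stmt9 (n r : ℕ) (hn : 1 ≤ n) (hr : 1 ≤ r)
    (C : ℕ → Matrix (Fin n) (Fin n) ℂ)
    (hC : ∀ i, 1 ≤ i → i ≤ 2 * r + 1 → IsUnit (C i))
    (md : Fin n → ℂ) (M : Matrix (Fin n) (Fin n) ℂ) (hM : IsUnit M)
    (E : Matrix (Fin n) (Fin n) ℂ)
    (hE : E = Matrix.diagonal fun a => Complex.exp (-(2 * (Real.pi : ℂ) * Complex.I) * md a))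
    (hrel : C (2 * r + 1) = E * C 1 * M)
    (γ γ' : ℕ → Matrix (Fin n) (Fin n) ℂ) (μd μ'd : Fin n → ℂ)
    (hγ : γ (2 * r + 1)
      = E * (γ 1 - (2 * (Real.pi : ℂ) * Complex.I) • (Matrix.diagonal μd * C 1)) * M)
    (hγ' : γ' (2 * r + 1)
      = E * (γ' 1 - (2 * (Real.pi : ℂ) * Complex.I) • (Matrix.diagonal μ'd * C 1)) * M)
    (σf : (ℕ → Matrix (Fin n) (Fin n) ℂ) → ℕ → Matrix (Fin n) (Fin n) ℂ)
    (hσf : ∀ g i, σf g i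
      = C i * ((C i)⁻¹ * g i - (C (i + 1))⁻¹ * g (i + 1)) * (C i)⁻¹)
    (htr : ∀ i, 1 ≤ i → i ≤ 2 * r → (σf γ i * σf γ' i).trace = 0)
    (ω : (ℕ → Matrix (Fin n) (Fin n) ℂ) → (Fin n → ℂ)
      → (ℕ → Matrix (Fin n) (Fin n) ℂ) → (Fin n → ℂ) → ℂ)
    (hω : ∀ g mu g' mu', ω g mu g' mu'
      = (2 * (Real.pi : ℂ) * Complex.I)⁻¹
          * ∑ i ∈ Finset.Icc 1 (2 * r), (g i * (C i)⁻¹ * σf g' i).trace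
        + (Real.pi : ℂ) * Complex.I
            * (Matrix.diagonal mu * Matrix.diagonal mu').trace
        - (g 1 * (C 1)⁻¹ * Matrix.diagonal mu').trace) :
    ω γ μd γ' μ'd = -ω γ' μ'd γ μd := by
  set c : ℂ := 2 * (Real.pi : ℂ) * Complex.I with hc
  have hcne : c ≠ 0 := by
    simp [hc, Complex.ext_iff, Real.pi_ne_zero, Complex.I_ne_zero, mul_ne_zero,
      Complex.ofReal_ne_zero]
  set D : Matrix (Fin n) (Fin n) ℂ := Matrix.diagonal μd with hD
  set D' : Matrix (Fin n) (Fin n) ℂ := Matrix.diagonal μ'd with hD'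
  have hdet : ∀ i, 1 ≤ i → i ≤ 2 * r + 1 → IsUnit (C i).det := fun i h1 h2 =>
    (Matrix.isUnit_iff_isUnit_det _).mp (hC i h1 h2)
  have hPC : ∀ i, 1 ≤ i → i ≤ 2 * r + 1 → (C i)⁻¹ * C i = 1 := fun i h1 h2 =>
    Matrix.nonsing_inv_mul _ (hdet i h1 h2)
  have hCP : ∀ i, 1 ≤ i → i ≤ 2 * r + 1 → C i * (C i)⁻¹ = 1 := fun i h1 h2 =>
    Matrix.mul_nonsing_inv _ (hdet i h1 h2)
  have hMdet : IsUnit M.det := (Matrix.isUnit_iff_isUnit_det _).mp hM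
  have hMM : M * M⁻¹ = 1 := Matrix.mul_nonsing_inv _ hMdet
  have hEE : E⁻¹ * E = 1 := by
    refine Matrix.nonsing_inv_mul _ ?_
    rw [hE, Matrix.det_diagonal]
    exact isUnit_iff_ne_zero.mpr (Finset.prod_ne_zero_iff.mpr fun i _ => Complex.exp_ne_zero _)
  -- the quantities `f i = tr(A_i A'_i)` with `A_i = C_i⁻¹ γ_i`
  set f : ℕ → ℂ := fun i => (((C i)⁻¹ * γ i) * ((C i)⁻¹ * γ' i)).trace with hf
  -- key identity for each index, using `tr (σᵢ σ'ᵢ) = 0`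
  have key : ∀ i ∈ Finset.Icc 1 (2 * r),
      (γ i * (C i)⁻¹ * σf γ' i).trace + (γ' i * (C i)⁻¹ * σf γ i).trace = f i - f (i + 1) := by
    intro i hi
    obtain ⟨h1, h2⟩ := Finset.mem_Icc.mp hi
    have hPCi : (C i)⁻¹ * C i = 1 := hPC i h1 (by omega)
    have conv : ∀ g g' : ℕ → Matrix (Fin n) (Fin n) ℂ,
        (g i * (C i)⁻¹ * σf g' i).trace
          = (((C i)⁻¹ * g i) * ((C i)⁻¹ * g' i - (C (i + 1))⁻¹ * g' (i + 1))).trace := by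
      intro g g'
      rw [hσf]
      exact trconv9 (C i) ((C i)⁻¹) (g i) _ hPCi
    have htr' : (((C i)⁻¹ * γ i - (C (i + 1))⁻¹ * γ (i + 1))
        * ((C i)⁻¹ * γ' i - (C (i + 1))⁻¹ * γ' (i + 1))).trace = 0 := by
      have := htr i h1 h2
      rwa [hσf, hσf, trconv9' (C i) ((C i)⁻¹) _ _ hPCi] at this
    rw [conv γ γ', conv γ' γ]
    exact traux9 _ _ _ _ htr'
  -- telescoping sum
  have hsum : (∑ i ∈ Finset.Icc 1 (2 * r), (γ i * (C i)⁻¹ * σf γ' i).trace)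
      + (∑ i ∈ Finset.Icc 1 (2 * r), (γ' i * (C i)⁻¹ * σf γ i).trace)
      = f 1 - f (2 * r + 1) := by
    rw [← Finset.sum_add_distrib, Finset.sum_congr rfl key, tele9]
  -- computation of `f (2r+1)` from the linearized monodromy relation
  have hCinv : (C (2 * r + 1))⁻¹ = M⁻¹ * ((C 1)⁻¹ * E⁻¹) := by
    rw [hrel, Matrix.mul_inv_rev, Matrix.mul_inv_rev]
  have hA : ∀ (g : ℕ → Matrix (Fin n) (Fin n) ℂ) (Dd : Matrix (Fin n) (Fin n) ℂ),
      g (2 * r + 1) = E * (g 1 - c • (Dd * C 1)) * M →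
      (C (2 * r + 1))⁻¹ * g (2 * r + 1)
        = M⁻¹ * ((C 1)⁻¹ * g 1 - c • ((C 1)⁻¹ * (Dd * C 1))) * M := by
    intro g Dd hg
    rw [hCinv, hg,
      show M⁻¹ * ((C 1)⁻¹ * E⁻¹) * (E * (g 1 - c • (Dd * C 1)) * M)
        = M⁻¹ * ((C 1)⁻¹ * ((E⁻¹ * E) * (g 1 - c • (Dd * C 1)))) * M by noncomm_ring,
      hEE, one_mul, Matrix.mul_sub, Matrix.mul_smul]
  have hPC1 : (C 1)⁻¹ * C 1 = 1 := hPC 1 le_rfl (by omega)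
  have hCP1 : C 1 * (C 1)⁻¹ = 1 := hCP 1 le_rfl (by omega)
  have hfend : f (2 * r + 1)
      = f 1 - c * (γ 1 * (C 1)⁻¹ * D').trace - c * (γ' 1 * (C 1)⁻¹ * D).trace
        + c ^ 2 * (D * D').trace := by
    have hX := hA γ D hγ
    have hX' := hA γ' D' hγ'
    rw [hf]
    dsimp only
    rw [hX, hX',
      trconv9' M⁻¹ M ((C 1)⁻¹ * γ 1 - c • ((C 1)⁻¹ * (D * C 1)))
        ((C 1)⁻¹ * γ' 1 - c • ((C 1)⁻¹ * (D' * C 1))) hMM]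
    have e1 : (((C 1)⁻¹ * γ 1) * ((C 1)⁻¹ * (D' * C 1))).trace
        = (γ 1 * (C 1)⁻¹ * D').trace := trG9 (C 1) ((C 1)⁻¹) (γ 1) D' hCP1
    have e2 : (((C 1)⁻¹ * (D * C 1)) * ((C 1)⁻¹ * γ' 1)).trace
        = (γ' 1 * (C 1)⁻¹ * D).trace := by
      rw [Matrix.trace_mul_comm]
      exact trG9 (C 1) ((C 1)⁻¹) (γ' 1) D hCP1
    have e3 : (((C 1)⁻¹ * (D * C 1)) * ((C 1)⁻¹ * (D' * C 1))).trace = (D * D').trace := by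
      rw [trG9 (C 1) ((C 1)⁻¹) (D * C 1) D' hCP1, Matrix.mul_assoc D (C 1) (C 1)⁻¹, hCP1,
        Matrix.mul_one]
    simp only [Matrix.sub_mul, Matrix.mul_sub, Matrix.smul_mul, Matrix.mul_smul,
      Matrix.trace_sub, Matrix.trace_smul, smul_smul, smul_eq_mul]
    linear_combination (-c) * e1 - c * e2 + (c * c) * e3
  -- assembling everything
  have hinvc : c⁻¹ * c = 1 := inv_mul_cancel₀ hcne
  rw [hω γ μd γ' μ'd, hω γ' μ'd γ μd]
  linear_combination c⁻¹ * hsum - c⁻¹ * hfend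
    + ((γ 1 * (C 1)⁻¹ * D').trace + (γ' 1 * (C 1)⁻¹ * D).trace - c * (D * D').trace) * hinvc
    + ((Real.pi : ℂ) * Complex.I) * Matrix.trace_mul_comm D' D
    - (D * D').trace * hc
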